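/- arXiv:1909.07344 — 3 statements merged into one kernel-verified Lean document; each statement's English description precedes it below -/
import Mathlib

section
/- Let A be an invertible Hermitian N×N complex matrix with ‖A‖ ≤ 1, and b ∈ ℂ^N a unit vector. Define the Hamiltonian loss L_H(x) = ⟨x, A²x⟩ − |⟨b, Ax⟩|² for unit vectors x. Then L_H(x) ≥ 0 for every unit vector x, and L_H(x) = 0 if and only if x is a scalar multiple (of modulus 1 times) A⁻¹b/‖A⁻¹b‖. -/
open scoped Matrix

/-- for invertible Hermitian `A` with operator norm at most 1 and a
unit vector `b`, the Hamiltonian loss `L_H(x) = ⟨x, A²x⟩ − |⟨b, Ax⟩|²` is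
nonnegative on unit vectors and vanishes exactly at the unit multiples of
`A⁻¹b/‖A⁻¹b‖`. -/
theorem stmt_5 (N : ℕ) (A : Matrix (Fin N) (Fin N) ℂ) (hA : A.IsHermitian)
    (hAinv : IsUnit A)
    (hAnorm : ‖Matrix.toEuclideanCLM (𝕜 := ℂ) A‖ ≤ 1)
    (b : EuclideanSpace ℂ (Fin N)) (hb : ‖b‖ = 1)
    (L : EuclideanSpace ℂ (Fin N) → ℝ)
    (hL : ∀ x, L x =
        (inner ℂ x (Matrix.toEuclideanCLM (𝕜 := ℂ) (A * A) x) : ℂ).re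
          - ‖inner ℂ b (Matrix.toEuclideanCLM (𝕜 := ℂ) A x)‖ ^ 2) :
    ∀ x : EuclideanSpace ℂ (Fin N), ‖x‖ = 1 →
      0 ≤ L x ∧
        (L x = 0 ↔ ∃ c : ℂ, ‖c‖ = 1 ∧
          x = c • (‖Matrix.toEuclideanCLM (𝕜 := ℂ) A⁻¹ b‖⁻¹ •
            Matrix.toEuclideanCLM (𝕜 := ℂ) A⁻¹ b)) := by
  intro x hx
  set T := Matrix.toEuclideanCLM (𝕜 := ℂ) A with hT
  set S := Matrix.toEuclideanCLM (𝕜 := ℂ) A⁻¹ with hS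
  -- basic algebra facts
  have hdet : IsUnit A.det := (Matrix.isUnit_iff_isUnit_det A).1 hAinv
  have hAAinv : A * A⁻¹ = 1 := Matrix.mul_nonsing_inv A hdet
  have hAinvA : A⁻¹ * A = 1 := Matrix.nonsing_inv_mul A hdet
  have hTS : ∀ y, T (S y) = y := by
    intro y
    have h : T * S = 1 := by
      rw [hT, hS, ← map_mul, hAAinv, map_one]
    calc T (S y) = (T * S) y := rfl
      _ = y := by rw [h]; rfl
  have hST : ∀ y, S (T y) = y := by
    intro y
    have h : S * T = 1 := by
      rw [hT, hS, ← map_mul, hAinvA, map_one]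
    calc S (T y) = (S * T) y := rfl
      _ = y := by rw [h]; rfl
  -- self-adjointness
  have hsa : IsSelfAdjoint T := by
    rw [hT, isSelfAdjoint_iff, ← map_star]
    congr 1
  have hadj : ContinuousLinearMap.adjoint T = T := hsa.adjoint_eq
  -- rewrite the quadratic term
  have hTT : ∀ y : EuclideanSpace ℂ (Fin N),
      (inner ℂ y (Matrix.toEuclideanCLM (𝕜 := ℂ) (A * A) y) : ℂ).re = ‖T y‖ ^ 2 := by
    intro y
    have h1 : Matrix.toEuclideanCLM (𝕜 := ℂ) (A * A) y = T (T y) := by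
      rw [map_mul]; rfl
    rw [h1]
    have h2 : (inner ℂ y (T (T y)) : ℂ) = inner ℂ (T y) (T y) := by
      conv_lhs => rw [← hadj]
      rw [ContinuousLinearMap.adjoint_inner_right, hadj]
    rw [h2]
    exact inner_self_eq_norm_sq (𝕜 := ℂ) (T y)
  have hb0 : b ≠ 0 := by intro h; rw [h, norm_zero] at hb; norm_num at hb
  have hSb0 : S b ≠ 0 := by
    intro h
    exact hb0 (by rw [← hTS b, h, map_zero])
  have hSbn : ‖S b‖ ≠ 0 := norm_ne_zero_iff.2 hSb0
  have hx0 : x ≠ 0 := by intro h; rw [h, norm_zero] at hx; norm_num at hx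
  have hTx0 : T x ≠ 0 := by
    intro h
    exact hx0 (by rw [← hST x, h, map_zero])
  -- Cauchy–Schwarz bound
  have hCS : ‖inner ℂ b (T x)‖ ≤ ‖T x‖ := by
    have := norm_inner_le_norm (𝕜 := ℂ) b (T x)
    simpa [hb] using this
  have hLx : L x = ‖T x‖ ^ 2 - ‖inner ℂ b (T x)‖ ^ 2 := by
    rw [hL x, hTT x]
  constructor
  · rw [hLx]
    have : ‖inner ℂ b (T x)‖ ^ 2 ≤ ‖T x‖ ^ 2 := by
      apply pow_le_pow_left₀ (norm_nonneg _) hCS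
    linarith
  constructor
  · intro h0
    have heq : ‖inner ℂ b (T x)‖ = ‖T x‖ := by
      rw [hLx] at h0
      refine le_antisymm hCS ?_
      nlinarith [norm_nonneg (inner ℂ b (T x) : ℂ), norm_nonneg (T x)]
    have heq' : ‖(inner ℂ b (T x) : ℂ)‖ = ‖b‖ * ‖T x‖ := by
      rw [hb, one_mul, heq]
    obtain ⟨r, hr0, hrx⟩ := (norm_inner_eq_norm_iff hb0 hTx0).1 heq'
    have hxr : x = r • S b := by
      rw [← hST x, hrx, map_smul]
    have hnorm : ‖r‖ * ‖S b‖ = 1 := by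
      rw [hxr] at hx
      simpa [norm_smul] using hx
    refine ⟨r * (‖S b‖ : ℂ), ?_, ?_⟩
    · simpa [norm_mul, abs_of_nonneg (norm_nonneg (S b))] using hnorm
    · rw [hxr]
      conv_rhs => rw [← Complex.coe_smul, smul_smul]
      congr 1
      have hSbc : (‖S b‖ : ℂ) ≠ 0 := by exact_mod_cast hSbn
      push_cast
      field_simp
  · rintro ⟨c, hc1, hcx⟩
    have hTx : T x = (c * (‖S b‖ : ℂ)⁻¹) • b := by
      rw [hcx, map_smul, T.map_smul_of_tower, hTS, ← Complex.coe_smul, smul_smul]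
      congr 1
      push_cast
      ring
    rw [hLx, hTx]
    have habs : ‖c * (‖S b‖ : ℂ)⁻¹‖ = ‖S b‖⁻¹ := by
      simp [norm_mul, hc1, abs_of_nonneg (norm_nonneg (S b))]
    have h1 : ‖(c * (‖S b‖ : ℂ)⁻¹) • b‖ = ‖S b‖⁻¹ := by
      rw [norm_smul, hb, mul_one, habs]
    have h2 : (inner ℂ b ((c * (‖S b‖ : ℂ)⁻¹) • b) : ℂ) = c * (‖S b‖ : ℂ)⁻¹ := by
      rw [inner_smul_right, inner_self_eq_norm_sq_to_K, hb]
      push_cast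
      ring
    rw [h1, h2, habs]
    ring
end

section
/- Let A be Hermitian with ‖A‖ ≤ 1, b a unit vector, and suppose there exists a polynomial p of degree at most d and ε ∈ (0,1) with sup_{x∈[−1,1]} |p(x) − 2x/(2x²+1)| ≤ η. Then the Tikhonov loss satisfies L_T(p(A)b) ≤ min_{x∈ℂ^N} L_T(x) + (3/2)η², where L_T(x) = (1/2)‖x‖² + ‖Ax − b‖². -/
open scoped Matrix

private lemma stmt14_upper_aux {l t η : ℝ} (hl : l^2 ≤ 1)
    (h : |t - 2*l/(2*l^2+1)| ≤ η) :
    1/2*t^2 + (l*t-1)^2 ≤ 1/(2*l^2+1) + 3/2*η^2 := by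
  have hpos : (0:ℝ) < 2*l^2+1 := by positivity
  have key : 1/2*t^2 + (l*t-1)^2 =
      1/(2*l^2+1) + (l^2+1/2)*(t-2*l/(2*l^2+1))^2 := by
    field_simp
    ring
  have hd2 : (t - 2*l/(2*l^2+1))^2 ≤ η^2 :=
    sq_le_sq' (abs_le.1 h).1 (abs_le.1 h).2
  nlinarith [sq_nonneg (t - 2*l/(2*l^2+1))]

private lemma stmt14_lower_aux (l : ℝ) (z c : ℂ) :
    ‖c‖^2 / (2*l^2+1) ≤ 1/2*‖z‖^2 + ‖(l:ℂ)*z - c‖^2 := by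
  have hpos : (0:ℝ) < 2*l^2+1 := by positivity
  have h1 : ∀ w : ℂ, ‖w‖^2 = w.re^2 + w.im^2 := fun w => by
    rw [Complex.sq_norm, Complex.normSq_apply]; ring
  rw [div_le_iff₀ hpos, h1, h1, h1]
  simp only [Complex.sub_re, Complex.sub_im, Complex.mul_re, Complex.mul_im,
    Complex.ofReal_re, Complex.ofReal_im]
  nlinarith [sq_nonneg ((2*l^2+1)*z.re - 2*l*c.re), sq_nonneg ((2*l^2+1)*z.im - 2*l*c.im)]

private lemma stmt14_sum_coord {N : ℕ} (s : Finset (Fin N))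
    (g : Fin N → EuclideanSpace ℂ (Fin N)) (i : Fin N) :
    (∑ j ∈ s, g j) i = ∑ j ∈ s, g j i := by
  induction s using Finset.induction_on with
  | empty => rfl
  | insert a s h ih => simp [Finset.sum_insert h, ih]

/-- if `A` is Hermitian with operator norm at most 1, `b` is a
unit vector, and `p` is a real polynomial of degree at most `d` with
`sup_{x∈[−1,1]} |p(x) − 2x/(2x²+1)| ≤ η`, then the Tikhonov loss satisfies
`L_T(p(A)b) ≤ min_x L_T(x) + (3/2)η²`. -/
theorem stmt_14 (N d : ℕ) (A : Matrix (Fin N) (Fin N) ℂ) (hA : A.IsHermitian)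
    (hAnorm : ‖Matrix.toEuclideanCLM (𝕜 := ℂ) A‖ ≤ 1)
    (b : EuclideanSpace ℂ (Fin N)) (hb : ‖b‖ = 1)
    (L : EuclideanSpace ℂ (Fin N) → ℝ)
    (hL : ∀ x, L x = (1 / 2) * ‖x‖ ^ 2 +
        ‖Matrix.toEuclideanCLM (𝕜 := ℂ) A x - b‖ ^ 2)
    (η : ℝ) (hη : η ∈ Set.Ioo (0 : ℝ) 1)
    (p : Polynomial ℝ) (hdeg : p.natDegree ≤ d)
    (happrox : ∀ x ∈ Set.Icc (-1 : ℝ) 1,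
      |p.eval x - 2 * x / (2 * x ^ 2 + 1)| ≤ η) :
    L (Matrix.toEuclideanCLM (𝕜 := ℂ)
        (Polynomial.aeval A (p.map (algebraMap ℝ ℂ))) b) ≤
      (⨅ x : EuclideanSpace ℂ (Fin N), L x) + (3 / 2) * η ^ 2 := by
  classical
  set T := Matrix.toEuclideanCLM (𝕜 := ℂ) A with hT
  set B := hA.eigenvectorBasis with hB
  set μ := hA.eigenvalues with hμdef
  set q : Polynomial ℂ := p.map (algebraMap ℝ ℂ) with hq
  -- eigenvector equation at the CLM level
  have hTv : ∀ j, T (B j) = ((μ j : ℂ)) • B j := by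
    intro j
    apply (WithLp.equiv 2 (Fin N → ℂ)).injective
    rw [hT, WithLp.equiv_apply, WithLp.equiv_apply, Matrix.ofLp_toEuclideanCLM]
    have h0 := hA.mulVec_eigenvectorBasis j
    rw [h0]
    ext i
    simp [Complex.real_smul]
    rfl
  -- powers
  have hTn : ∀ (n : ℕ) j, (T^n) (B j) = ((μ j : ℂ)^n) • B j := by
    intro n j
    induction n with
    | zero => simp
    | succ n ih =>
      rw [pow_succ, ContinuousLinearMap.mul_apply, hTv, map_smul, ih,
        smul_smul, pow_succ]
      ring_nf
  -- aeval applied to eigenvectors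
  have hSv : ∀ (r : Polynomial ℂ) j,
      (Polynomial.aeval T r) (B j) = r.eval ((μ j : ℂ)) • B j := by
    intro r j
    induction r using Polynomial.induction_on' with
    | add f g hf hg =>
      simp [map_add, ContinuousLinearMap.add_apply, hf, hg, add_smul]
    | monomial n a =>
      simp [Polynomial.aeval_monomial, Polynomial.eval_monomial,
        ContinuousLinearMap.mul_apply, Algebra.algebraMap_eq_smul_one,
        ContinuousLinearMap.smul_apply, hTn, smul_smul]
  -- the matrix polynomial as aeval of T
  have hM : Matrix.toEuclideanCLM (𝕜 := ℂ) (Polynomial.aeval A q) =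
      Polynomial.aeval T q := (Polynomial.aeval_algHom_apply _ A q).symm
  -- coordinates of operators with the eigenbasis as eigenvectors
  have key : ∀ (Op : EuclideanSpace ℂ (Fin N) →L[ℂ] EuclideanSpace ℂ (Fin N))
      (f : Fin N → ℂ), (∀ j, Op (B j) = f j • B j) →
      ∀ x i, B.repr (Op x) i = f i * B.repr x i := by
    intro Op f hOp x i
    conv_lhs => rw [← B.sum_repr x]
    rw [map_sum, map_sum]
    simp only [map_smul, hOp, OrthonormalBasis.repr_self]
    rw [stmt14_sum_coord]
    simp [EuclideanSpace.single_apply, mul_comm]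
  -- Parseval
  have hpar : ∀ x : EuclideanSpace ℂ (Fin N), ‖x‖^2 = ∑ i, ‖B.repr x i‖^2 := by
    intro x
    rw [← B.repr.norm_map x]
    exact PiLp.norm_sq_eq_of_L2 _ _
  -- expand the loss in coordinates
  have hLx : ∀ x, L x = ∑ i, (1/2*‖B.repr x i‖^2 +
      ‖(μ i : ℂ) * B.repr x i - B.repr b i‖^2) := by
    intro x
    rw [hL, hpar x, hpar (T x - b), Finset.mul_sum, ← Finset.sum_add_distrib]
    refine Finset.sum_congr rfl fun i _ => ?_
    congr 2
    rw [map_sub]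
    have := key T (fun j => (μ j : ℂ)) hTv x i
    simp only [PiLp.sub_apply] at *
    rw [this]
  -- eigenvalues are bounded by 1
  have hμ1 : ∀ j, |μ j| ≤ 1 := by
    intro j
    have h1 : ‖B j‖ = 1 := B.orthonormal.1 j
    have h2 := T.le_opNorm (B j)
    rw [hTv j, norm_smul, h1] at h2
    have h3 : ‖((μ j : ℂ))‖ = |μ j| := by
      rw [Complex.norm_real, Real.norm_eq_abs]
    rw [h3] at h2
    simp only [mul_one] at h2
    calc |μ j| ≤ ‖T‖ := h2
    _ ≤ 1 := hAnorm
  -- total mass of coefficients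
  have hb1 : ∑ i, ‖B.repr b i‖^2 = 1 := by
    rw [← hpar b, hb]; norm_num
  -- the lower bound on the loss
  set m : ℝ := ∑ i, ‖B.repr b i‖^2 / (2*(μ i)^2+1) with hm
  have hlow : ∀ x, m ≤ L x := by
    intro x
    rw [hLx x]
    exact Finset.sum_le_sum fun i _ => stmt14_lower_aux (μ i) _ _
  have hinf : m ≤ ⨅ x : EuclideanSpace ℂ (Fin N), L x := le_ciInf hlow
  -- the upper bound on the loss at p(A) b
  have hub : L (Matrix.toEuclideanCLM (𝕜 := ℂ) (Polynomial.aeval A q) b)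
      ≤ m + 3/2*η^2 := by
    rw [hLx, hM]
    have hz : ∀ i, B.repr ((Polynomial.aeval T q) b) i =
        ((p.eval (μ i) : ℝ) : ℂ) * B.repr b i := by
      intro i
      rw [key (Polynomial.aeval T q) (fun j => q.eval ((μ j : ℂ)))
        (fun j => hSv q j) b i]
      congr 1
      rw [hq, Polynomial.eval_map]
      exact Polynomial.eval₂_at_apply _ _
    calc ∑ i, (1/2*‖B.repr ((Polynomial.aeval T q) b) i‖^2 +
          ‖(μ i : ℂ) * B.repr ((Polynomial.aeval T q) b) i - B.repr b i‖^2)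
        ≤ ∑ i, (‖B.repr b i‖^2 / (2*(μ i)^2+1) + 3/2*η^2 * ‖B.repr b i‖^2) := by
          refine Finset.sum_le_sum fun i _ => ?_
          rw [hz i]
          set t : ℝ := p.eval (μ i)
          set c : ℂ := B.repr b i
          have e1 : ‖((t:ℝ):ℂ) * c‖^2 = t^2 * ‖c‖^2 := by
            rw [norm_mul, Complex.norm_real, Real.norm_eq_abs, mul_pow, sq_abs]
          have e2 : ‖(μ i : ℂ) * (((t:ℝ):ℂ) * c) - c‖^2 = (μ i * t - 1)^2 * ‖c‖^2 := by
            have : (μ i : ℂ) * (((t:ℝ):ℂ) * c) - c = (((μ i * t - 1 : ℝ)):ℂ) * c := by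
              push_cast; ring
            rw [this, norm_mul, Complex.norm_real, Real.norm_eq_abs, mul_pow, sq_abs]
          rw [e1, e2]
          have hi : μ i ∈ Set.Icc (-1:ℝ) 1 := by
            constructor <;> [linarith [abs_le.1 (hμ1 i) |>.1]; exact (abs_le.1 (hμ1 i)).2]
          have hup := stmt14_upper_aux (by nlinarith [sq_abs (μ i), hμ1 i, abs_nonneg (μ i)])
            (happrox (μ i) hi)
          have hc : (0:ℝ) ≤ ‖c‖^2 := sq_nonneg _
          rw [show Polynomial.eval (μ i) p = t from rfl] at hup
          rw [show ‖c‖^2 / (2 * μ i ^ 2 + 1) = (1 / (2 * μ i ^ 2 + 1)) * ‖c‖^2 from by ring]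
          nlinarith [mul_le_mul_of_nonneg_right hup hc]
      _ = m + 3/2*η^2 := by
          rw [Finset.sum_add_distrib, ← Finset.mul_sum, hb1, hm, mul_one]
  linarith [hub, hinf]
end

section
/- Let v₀, v₁ ∈ ℂ^N be unit vectors and O = U†DU a Hermitian N×N matrix with U unitary and D real diagonal. Set ξ = (1/2)(e₀ ⊗ U(v₀ + v₁) + e₁ ⊗ U(v₀ − v₁)). Then ⟨ξ, (Z ⊗ D) ξ⟩ = Re⟨v₀, O v₁⟩. -/
open scoped Matrix

lemma key_id (x y : ℂ) :
    ((starRingEnd ℂ) (x + y) * (x - y)).re = ‖x‖ ^ 2 - ‖y‖ ^ 2 := by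
  simp [← Complex.sq_norm, Complex.sq_norm, Complex.normSq_apply, Complex.mul_re]
  ring

/-- modified Hadamard test: for unit vectors `v₀, v₁ ∈ ℂ^N`,
`O = U†DU` with `U` unitary and `D` real diagonal, and
`ξ = (1/2)(e₀ ⊗ U(v₀ + v₁) + e₁ ⊗ U(v₀ − v₁))`, one has
`⟨ξ, (Z ⊗ D) ξ⟩ = Re⟨v₀, O v₁⟩`, where the `Z ⊗ D` expectation is written as
the signed, `d`-weighted sum of squared amplitudes. -/
theorem stmt_17 (N : ℕ) (v₀ v₁ : EuclideanSpace ℂ (Fin N))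
    (h₀ : ‖v₀‖ = 1) (h₁ : ‖v₁‖ = 1)
    (U : Matrix (Fin N) (Fin N) ℂ) (hU : U ∈ Matrix.unitaryGroup (Fin N) ℂ)
    (d : Fin N → ℝ)
    (O : Matrix (Fin N) (Fin N) ℂ)
    (hO : O = Uᴴ * Matrix.diagonal (fun i => (d i : ℂ)) * U)
    (ξ : Fin 2 → Fin N → ℂ)
    (hξ0 : ∀ i, ξ 0 i = U.mulVec (fun j => (v₀ j + v₁ j) / 2) i)
    (hξ1 : ∀ i, ξ 1 i = U.mulVec (fun j => (v₀ j - v₁ j) / 2) i) :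
    (∑ i, d i * ‖ξ 0 i‖ ^ 2) -
        (∑ i, d i * ‖ξ 1 i‖ ^ 2) =
      (inner ℂ v₀ (Matrix.toEuclideanCLM (𝕜 := ℂ) O v₁) : ℂ).re := by
  set a : Fin N → ℂ := U.mulVec (fun j => v₀ j) with ha
  set b : Fin N → ℂ := U.mulVec (fun j => v₁ j) with hb
  have hsum : ∀ i, ξ 0 i + ξ 1 i = a i := by
    intro i
    rw [hξ0, hξ1, ha]
    simp only [Matrix.mulVec, dotProduct, ← Finset.sum_add_distrib]
    congr 1; funext j; ring
  have hdiff : ∀ i, ξ 0 i - ξ 1 i = b i := by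
    intro i
    rw [hξ0, hξ1, hb]
    simp only [Matrix.mulVec, dotProduct, ← Finset.sum_sub_distrib]
    congr 1; funext j; ring
  have hL : (∑ i, d i * ‖ξ 0 i‖ ^ 2) -
      (∑ i, d i * ‖ξ 1 i‖ ^ 2)
      = ∑ i, d i * ((starRingEnd ℂ) (a i) * b i).re := by
    rw [← Finset.sum_sub_distrib]
    refine Finset.sum_congr rfl fun i _ => ?_
    rw [← hsum i, ← hdiff i, key_id]
    ring
  rw [hL]
  have hR : (inner ℂ v₀ (Matrix.toEuclideanCLM (𝕜 := ℂ) O v₁) : ℂ)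
      = ∑ i, (d i : ℂ) * ((starRingEnd ℂ) (a i) * b i) := by
    rw [PiLp.inner_apply]
    have happ : ∀ i, (Matrix.toEuclideanCLM (𝕜 := ℂ) O v₁ : EuclideanSpace ℂ (Fin N)) i
        = O.mulVec (fun j => v₁ j) i := by
      intro i
      have := congrFun (Matrix.ofLp_toEuclideanCLM (n := Fin N) (𝕜 := ℂ) O v₁) i
      simpa using this
    simp only [happ, RCLike.inner_apply]
    have : ∀ i, (O.mulVec (fun j => v₁ j)) i
        = Uᴴ.mulVec ((Matrix.diagonal (fun k => (d k : ℂ))).mulVec b) i := by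
      intro i
      rw [hO, hb, ← Matrix.mulVec_mulVec, ← Matrix.mulVec_mulVec]
    simp only [this]
    have hdot : ∑ i, (starRingEnd ℂ) (v₀ i) *
          Uᴴ.mulVec ((Matrix.diagonal (fun k => (d k : ℂ))).mulVec b) i
        = dotProduct (star (fun j => v₀ j))
            (Uᴴ.mulVec ((Matrix.diagonal (fun k => (d k : ℂ))).mulVec b)) := rfl
    rw [Finset.sum_congr rfl (fun i _ => mul_comm
      (Uᴴ.mulVec ((Matrix.diagonal (fun k => (d k : ℂ))).mulVec b) i) ((starRingEnd ℂ) (v₀ i)))]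
    rw [hdot, Matrix.dotProduct_mulVec, ← Matrix.star_mulVec, ← ha]
    simp only [dotProduct, Matrix.mulVec_diagonal, Pi.star_apply]
    refine Finset.sum_congr rfl fun k _ => ?_
    simp [Complex.star_def]
    ring
  rw [hR]
  simp [Complex.re_sum]
end
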